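/- Suppose the metric coefficients satisfy g_jj = C/M_j1 and √g / C = ∏_j η_j(u_j), where C = det S for a Stäckel matrix S and M_j1 are its first-column cofactors. If for each j the function f_j(u_j) satisfies (1/η_j)(η_j f_j')' + f_j Σ_{i=1}^s b_i Φ_ji = 0 with b₁ = λ², then ψ(u) = ∏_{j=1}^s f_j(u_j) satisfies the Helmholtz equation ∇²ψ + λ²ψ = 0, where ∇² = (1/√g) Σ_j ∂_j((√g/g_jj) ∂_j). -/

import Mathlib

open Finset

lemma prod_update_eq {s : ℕ} (F : Fin s → ℝ → ℝ) (u : Fin s → ℝ) (j : Fin s) (t : ℝ) :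
    ∏ i, F i (Function.update u j t i)
      = F j t * ∏ i ∈ Finset.univ.erase j, F i (u i) := by
  rw [← Finset.mul_prod_erase Finset.univ (fun i => F i (Function.update u j t i))
      (Finset.mem_univ j), Function.update_self]
  congr 1
  refine Finset.prod_congr rfl fun i hi => ?_
  rw [Function.update_of_ne (Finset.ne_of_mem_erase hi)]

lemma cofactor_sum {n : ℕ} (A : Matrix (Fin (n+1)) (Fin (n+1)) ℝ) (i : Fin (n+1)) :
    ∑ j : Fin (n+1), ((-1:ℝ) ^ (j:ℕ) * (A.submatrix j.succAbove Fin.succ).det) * A j i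
      = if i = 0 then A.det else 0 := by
  by_cases hi : i = 0
  · subst hi
    simp only [if_pos rfl]
    rw [Matrix.det_succ_column_zero]
    exact Finset.sum_congr rfl fun j _ => by ring
  · simp only [if_neg hi]
    set B := A.updateCol 0 (fun k => A k i) with hB
    have hdet : B.det = 0 := by
      apply Matrix.det_zero_of_column_eq (show (0 : Fin (n+1)) ≠ i from fun h => hi h.symm)
      intro k
      rw [hB, Matrix.updateCol_self, Matrix.updateCol_ne hi]
    calc ∑ j : Fin (n+1), ((-1:ℝ)^(j:ℕ) * (A.submatrix j.succAbove Fin.succ).det) * A j i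
        = ∑ j : Fin (n+1), (-1:ℝ)^(j:ℕ) * B j 0 * (B.submatrix j.succAbove Fin.succ).det := by
          refine Finset.sum_congr rfl fun j _ => ?_
          have h1 : B j 0 = A j i := by rw [hB, Matrix.updateCol_self]
          have h2 : B.submatrix j.succAbove Fin.succ = A.submatrix j.succAbove Fin.succ := by
            ext k l
            simp only [Matrix.submatrix_apply]
            rw [hB, Matrix.updateCol_ne (Fin.succ_ne_zero l)]
          rw [h1, h2]; ring
      _ = B.det := (Matrix.det_succ_column_zero B).symm
      _ = 0 := hdet

/-- Partial derivative of a function on `Fin s → ℝ` along the `j`-th coordinate. -/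
noncomputable def pderivAlong {s : ℕ} (j : Fin s) (F : (Fin s → ℝ) → ℝ)
    (u : Fin s → ℝ) : ℝ :=
  deriv (fun t => F (Function.update u j t)) (u j)

/-- Stäckel separability of the Helmholtz equation: if the diagonal metric
coefficients satisfy `g_jj = C / M_j1` and `√g / C = ∏_j η_j(u_j)` for a
Stäckel matrix `S` with determinant `C` and first-column cofactors `M_j1`, and
each factor `f_j` solves the separated Sturm–Liouville equation
`(1/η_j)(η_j f_j')' + f_j Σ_i b_i Φ_ji = 0` with `b₁ = λ²`, then the product
`ψ(u) = ∏_j f_j(u_j)` solves the Helmholtz equation `∇²ψ + λ²ψ = 0`, where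
`∇² = (1/√g) Σ_j ∂_j((√g/g_jj) ∂_j ·)`. -/
theorem stackel_separability_helmholtz
    (n : ℕ) (Φ : Fin (n + 1) → Fin (n + 1) → ℝ → ℝ)
    (hΦ : ∀ i j, ContDiff ℝ 1 (Φ i j))
    (S : (Fin (n + 1) → ℝ) → Matrix (Fin (n + 1)) (Fin (n + 1)) ℝ)
    (hS : ∀ u i j, S u i j = Φ i j (u i))
    (C : (Fin (n + 1) → ℝ) → ℝ) (hC : ∀ u, C u = (S u).det)
    (M : Fin (n + 1) → (Fin (n + 1) → ℝ) → ℝ)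
    (hM : ∀ j u, M j u =
      (-1 : ℝ) ^ (j : ℕ) * ((S u).submatrix j.succAbove Fin.succ).det)
    (hCpos : ∀ u, 0 < C u) (hMpos : ∀ j u, 0 < M j u)
    (η : Fin (n + 1) → ℝ → ℝ) (hη : ∀ j, ContDiff ℝ 1 (η j))
    (hηpos : ∀ j x, 0 < η j x)
    (gjj : Fin (n + 1) → (Fin (n + 1) → ℝ) → ℝ)
    (hg : ∀ j u, gjj j u = C u / M j u)
    (hsep : ∀ u, Real.sqrt (∏ k, gjj k u) / C u = ∏ k, η k (u k))
    (lam : ℝ) (b : Fin (n + 1) → ℝ) (hb : b 0 = lam ^ 2)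
    (f : Fin (n + 1) → ℝ → ℝ) (hf : ∀ j, ContDiff ℝ 2 (f j))
    (hode : ∀ j x, (1 / η j x) * deriv (fun y => η j y * deriv (f j) y) x +
      f j x * ∑ i, b i * Φ j i x = 0) :
    ∀ u : Fin (n + 1) → ℝ,
      (1 / Real.sqrt (∏ k, gjj k u)) *
        (∑ j, pderivAlong j (fun v =>
          (Real.sqrt (∏ k, gjj k v) / gjj j v) *
            pderivAlong j (fun w => ∏ i, f i (w i)) v) u) +
        lam ^ 2 * ∏ j, f j (u j) = 0 := by
  intro u
  have hC0 : ∀ v, C v ≠ 0 := fun v => (hCpos v).ne'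
  have hgpos : ∀ (j) (v), 0 < gjj j v := fun j v => by
    rw [hg]; exact div_pos (hCpos v) (hMpos j v)
  have hppos : ∀ v, 0 < ∏ k, gjj k v := fun v =>
    Finset.prod_pos fun k _ => hgpos k v
  have hsq : ∀ v, Real.sqrt (∏ k, gjj k v) = C v * ∏ k, η k (v k) := fun v => by
    have h := hsep v
    rw [div_eq_iff (hC0 v)] at h
    rw [h]; ring
  have hfd : ∀ j, Differentiable ℝ (f j) := fun j => (hf j).differentiable (by norm_num)
  have hfd1 : ∀ j, ContDiff ℝ 1 (deriv (f j)) := fun j => by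
    have h2 : ContDiff ℝ (1 + 1) (f j) := by
      rw [one_add_one_eq_two]; exact hf j
    exact (contDiff_succ_iff_deriv.mp h2).2.2
  have hinner : ∀ (j) (v : Fin (n+1) → ℝ),
      pderivAlong j (fun w => ∏ i, f i (w i)) v
        = deriv (f j) (v j) * ∏ i ∈ univ.erase j, f i (v i) := by
    intro j v
    unfold pderivAlong
    have h : (fun t => ∏ i, f i (Function.update v j t i))
        = fun t => f j t * ∏ i ∈ univ.erase j, f i (v i) := by
      funext t; exact prod_update_eq f v j t
    rw [h, deriv_mul_const (hfd j (v j))]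
  have hMc : ∀ (j) (t : ℝ), M j (Function.update u j t) = M j u := by
    intro j t
    rw [hM, hM]
    congr 2
    ext k l
    simp only [Matrix.submatrix_apply, hS]
    rw [Function.update_of_ne (Fin.succAbove_ne j k)]
  have hcoef : ∀ (j) (v : Fin (n+1) → ℝ),
      Real.sqrt (∏ k, gjj k v) / gjj j v = M j v * ∏ k, η k (v k) := by
    intro j v
    rw [hsq, hg]
    field_simp [hC0 v, (hMpos j v).ne']
  have hterm : ∀ j : Fin (n+1),
      pderivAlong j (fun v => (Real.sqrt (∏ k, gjj k v) / gjj j v) *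
          pderivAlong j (fun w => ∏ i, f i (w i)) v) u
        = -(M j u * (∏ k, η k (u k)) * (∏ i, f i (u i)) * ∑ i, b i * Φ j i (u j)) := by
    intro j
    have hrw : (fun t => (Real.sqrt (∏ k, gjj k (Function.update u j t)) /
          gjj j (Function.update u j t)) *
          pderivAlong j (fun w => ∏ i, f i (w i)) (Function.update u j t))
        = fun t => (M j u * (∏ k ∈ univ.erase j, η k (u k)) *
            (∏ i ∈ univ.erase j, f i (u i))) * (η j t * deriv (f j) t) := by
      funext t
      rw [hcoef, hinner, hMc, prod_update_eq η u j t, Function.update_self]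
      have h : ∏ i ∈ univ.erase j, f i (Function.update u j t i)
          = ∏ i ∈ univ.erase j, f i (u i) :=
        Finset.prod_congr rfl fun i hi => by
          rw [Function.update_of_ne (Finset.ne_of_mem_erase hi)]
      rw [h]; ring
    have hgoal : pderivAlong j (fun v => (Real.sqrt (∏ k, gjj k v) / gjj j v) *
          pderivAlong j (fun w => ∏ i, f i (w i)) v) u
        = deriv (fun t => (Real.sqrt (∏ k, gjj k (Function.update u j t)) /
            gjj j (Function.update u j t)) *
            pderivAlong j (fun w => ∏ i, f i (w i)) (Function.update u j t)) (u j) := rfl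
    rw [hgoal, hrw]
    have hdiff : DifferentiableAt ℝ (fun y => η j y * deriv (f j) y) (u j) :=
      (((hη j).differentiable one_ne_zero) (u j)).mul (((hfd1 j).differentiable one_ne_zero) (u j))
    rw [deriv_const_mul _ hdiff]
    have hD : deriv (fun y => η j y * deriv (f j) y) (u j)
        = -(η j (u j) * (f j (u j) * ∑ i, b i * Φ j i (u j))) := by
      have h0 := hode j (u j)
      have hne : η j (u j) ≠ 0 := (hηpos j (u j)).ne'
      field_simp [hne] at h0
      linarith [h0]
    rw [hD]
    have e1 : ∏ k, η k (u k) = η j (u j) * ∏ k ∈ univ.erase j, η k (u k) :=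
      (Finset.mul_prod_erase univ (fun k => η k (u k)) (Finset.mem_univ j)).symm
    have e2 : ∏ i, f i (u i) = f j (u j) * ∏ i ∈ univ.erase j, f i (u i) :=
      (Finset.mul_prod_erase univ (fun i => f i (u i)) (Finset.mem_univ j)).symm
    rw [e1, e2]; ring
  have key : ∑ j, M j u * ∑ i, b i * Φ j i (u j) = lam ^ 2 * C u := by
    have h1 : ∀ j : Fin (n+1), M j u * ∑ i, b i * Φ j i (u j)
        = ∑ i, b i * (((-1:ℝ)^(j:ℕ) * ((S u).submatrix j.succAbove Fin.succ).det) * S u j i) := by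
      intro j
      rw [hM, Finset.mul_sum]
      exact Finset.sum_congr rfl fun i _ => by rw [hS]; ring
    rw [Finset.sum_congr rfl fun j _ => h1 j, Finset.sum_comm]
    have h2 : ∀ i : Fin (n+1),
        ∑ j : Fin (n+1), b i * (((-1:ℝ)^(j:ℕ) * ((S u).submatrix j.succAbove Fin.succ).det) * S u j i)
          = b i * (if i = 0 then (S u).det else 0) := by
      intro i
      rw [← Finset.mul_sum, cofactor_sum (S u) i]
    rw [Finset.sum_congr rfl fun i _ => h2 i]
    simp only [mul_ite, mul_zero, Finset.sum_ite_eq', Finset.mem_univ, if_pos]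
    rw [hb, ← hC u]
  have hsum : ∑ j, pderivAlong j (fun v => (Real.sqrt (∏ k, gjj k v) / gjj j v) *
        pderivAlong j (fun w => ∏ i, f i (w i)) v) u
      = -((∏ k, η k (u k)) * (∏ i, f i (u i)) * (lam ^ 2 * C u)) := by
    rw [Finset.sum_congr rfl fun j _ => hterm j, ← key, Finset.mul_sum,
      ← Finset.sum_neg_distrib]
    exact Finset.sum_congr rfl fun j _ => by ring
  rw [hsum, hsq u]
  have hP : (∏ k, η k (u k)) ≠ 0 := (Finset.prod_pos fun k _ => hηpos k (u k)).ne'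
  field_simp [hC0 u, hP]
  ring
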